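/- arXiv:2510.16311 — 3 statements merged into one kernel-verified Lean document; each statement's English description precedes it below -/
import Mathlib

section
/- Monotonic entropy response (Theorem 1): for differentiable eigenvalue curves λ_k(q), the Von Neumann entropy H(q) = β·E_{p(q)}[λ(q)] + log Z(q) of the Gibbs distribution satisfies dH/dq = -β²·Cov_{p(q)}(λ(q), λ̇(q)). In particular, H is decreasing at q whenever the eigenvalues are positively correlated with their q-sensitivities under the Gibbs measure, and increasing whenever the correlation is negative. -/
/-- Monotonic entropy response: for differentiable eigenvalue curves `λ_k(q)`, the Von
Neumann entropy `H(q) = -Σ_k p_k(q) log p_k(q)` of the Gibbs distribution satisfies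
`dH/dq = -β²·Cov_{p(q)}(λ(q), λ̇(q))`. In particular `H` is decreasing at `q` when the
covariance is positive and increasing when it is negative. -/
theorem monotonic_entropy_response
    (n : ℕ) (hn : 0 < n) (β : ℝ) (hβ : 0 < β)
    (lam lam' : Fin n → ℝ → ℝ)
    (hderiv : ∀ k q, HasDerivAt (lam k) (lam' k q) q)
    (Z : ℝ → ℝ) (hZ : ∀ q, Z q = ∑ k, Real.exp (-β * lam k q))
    (p : Fin n → ℝ → ℝ) (hp : ∀ k q, p k q = Real.exp (-β * lam k q) / Z q)
    (Cov : ℝ → ℝ)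
    (hCov : ∀ q, Cov q = (∑ k, p k q * (lam k q * lam' k q)) -
      (∑ k, p k q * lam k q) * (∑ k, p k q * lam' k q)) :
    ∀ q, HasDerivAt (fun q' => -∑ k, p k q' * Real.log (p k q'))
        (-β ^ 2 * Cov q) q ∧
      (0 < Cov q → -β ^ 2 * Cov q < 0) ∧
      (Cov q < 0 → 0 < -β ^ 2 * Cov q) := by
  haveI : Nonempty (Fin n) := Fin.pos_iff_nonempty.mp hn
  intro q
  have hβ2 : (0:ℝ) < β ^ 2 := pow_pos hβ 2
  refine ⟨?_, fun h => by nlinarith, fun h => by nlinarith⟩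
  -- positivity of the partition sum
  have hFpos : ∀ q', 0 < ∑ k, Real.exp (-β * lam k q') := fun q' =>
    Finset.sum_pos (fun k _ => Real.exp_pos _) Finset.univ_nonempty
  -- rewrite the entropy function
  have hfun : (fun q' => -∑ k, p k q' * Real.log (p k q')) =
      (fun q' => β * ((∑ k, Real.exp (-β * lam k q') * lam k q') /
        (∑ k, Real.exp (-β * lam k q'))) + Real.log (∑ k, Real.exp (-β * lam k q'))) := by
    funext q'
    have hF := hFpos q'
    have hlog : ∀ k, Real.log (p k q') =
        -β * lam k q' - Real.log (∑ j, Real.exp (-β * lam j q')) := by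
      intro k
      rw [hp, hZ, Real.log_div (Real.exp_ne_zero _) hF.ne', Real.log_exp]
    have hterm : ∀ k, -(p k q' * Real.log (p k q')) =
        β * ((Real.exp (-β * lam k q') * lam k q') / (∑ j, Real.exp (-β * lam j q')))
          + (Real.exp (-β * lam k q') / (∑ j, Real.exp (-β * lam j q'))) *
            Real.log (∑ j, Real.exp (-β * lam j q')) := by
      intro k
      rw [hlog, hp, hZ]
      ring
    rw [← Finset.sum_neg_distrib]
    simp_rw [hterm]
    rw [Finset.sum_add_distrib, ← Finset.mul_sum, ← Finset.sum_div, ← Finset.sum_mul,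
      ← Finset.sum_div, div_self hF.ne', one_mul]
  rw [hfun]
  -- derivatives of the pieces
  have hE : ∀ k, HasDerivAt (fun q' => Real.exp (-β * lam k q'))
      (Real.exp (-β * lam k q) * (-β * lam' k q)) q :=
    fun k => ((hderiv k q).const_mul (-β)).exp
  have hF' : HasDerivAt (fun q' => ∑ k, Real.exp (-β * lam k q'))
      (∑ k, Real.exp (-β * lam k q) * (-β * lam' k q)) q :=
    HasDerivAt.fun_sum fun k _ => hE k
  have hA : HasDerivAt (fun q' => ∑ k, Real.exp (-β * lam k q') * lam k q')
      (∑ k, (Real.exp (-β * lam k q) * (-β * lam' k q) * lam k q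
        + Real.exp (-β * lam k q) * lam' k q)) q :=
    HasDerivAt.fun_sum fun k _ => (hE k).mul (hderiv k q)
  have hzne := (hFpos q).ne'
  have hG := ((hA.div hF' hzne).const_mul β).add (hF'.log hzne)
  -- identify the derivative value
  convert hG using 1
  case e'_4 => rfl
  case e'_5 => rfl
  case e'_8 => rfl
  set a := ∑ k, Real.exp (-β * lam k q) * (lam k q * lam' k q) with ha
  set b := ∑ k, Real.exp (-β * lam k q) * lam k q with hb
  set c := ∑ k, Real.exp (-β * lam k q) * lam' k q with hc
  set z := ∑ k, Real.exp (-β * lam k q) with hz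
  have hzpos : 0 < z := hFpos q
  have h1 : (∑ k, (Real.exp (-β * lam k q) * (-β * lam' k q) * lam k q
      + Real.exp (-β * lam k q) * lam' k q)) = -β * a + c := by
    rw [ha, hc, Finset.sum_add_distrib, Finset.mul_sum]
    congr 1
    exact Finset.sum_congr rfl fun k _ => by ring
  have h2 : (∑ k, Real.exp (-β * lam k q) * (-β * lam' k q)) = -β * c := by
    rw [hc, Finset.mul_sum]
    exact Finset.sum_congr rfl fun k _ => by ring
  have hCovq : Cov q = a / z - (b / z) * (c / z) := by
    rw [hCov]
    congr 1
    · rw [ha, Finset.sum_div]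
      exact Finset.sum_congr rfl fun k _ => by rw [hp, hZ, ← hz]; ring
    · congr 1
      · rw [hb, Finset.sum_div]
        exact Finset.sum_congr rfl fun k _ => by rw [hp, hZ, ← hz]; ring
      · rw [hc, Finset.sum_div]
        exact Finset.sum_congr rfl fun k _ => by rw [hp, hZ, ← hz]; ring
  rw [h1, h2, hCovq]
  field_simp
  ring
end

section
/- Bounded entropy variation (Theorem 2, eigenvalue version): suppose λ_k : ℝ → ℝ are continuously differentiable for k = 1,...,n, and let H(q) = -Σ_k p_k(q) log p_k(q) with p_k(q) = exp(-βλ_k(q))/Σ_j exp(-βλ_j(q)). If for some interval [q, q+Δq] the derivative vectors satisfy ‖λ̇(ξ)‖₂ ≤ C for all ξ in the interval, then |H(q+Δq) - H(q)| ≤ β²·σ_max·C·|Δq|, where σ_max = sup_{ξ∈[q,q+Δq]} σ_{p(ξ)}(λ(ξ)) is the supremum of the Gibbs standard deviation of the eigenvalues. -/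
open Set in
/-- Bounded entropy variation (eigenvalue version): if the eigenvalue curves `λ_k` are C¹
and `‖λ̇(ξ)‖₂ ≤ C` on `[q, q+Δq]`, then the Gibbs entropy satisfies
`|H(q+Δq) - H(q)| ≤ β²·σ_max·C·|Δq|`, where `σ_max` is the supremum over the interval of
the Gibbs standard deviation of the eigenvalues. -/
theorem bounded_entropy_variation
    (n : ℕ) (hn : 0 < n) (β : ℝ) (hβ : 0 < β)
    (lam lam' : Fin n → ℝ → ℝ)
    (hderiv : ∀ k ξ, HasDerivAt (lam k) (lam' k ξ) ξ)
    (hcont : ∀ k, Continuous (lam' k))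
    (q Δq : ℝ) (hΔq : 0 < Δq)
    (p : Fin n → ℝ → ℝ)
    (hp : ∀ k ξ, p k ξ = Real.exp (-β * lam k ξ) / ∑ j, Real.exp (-β * lam j ξ))
    (H : ℝ → ℝ) (hH : ∀ ξ, H ξ = -∑ k, p k ξ * Real.log (p k ξ))
    (σ : ℝ → ℝ)
    (hσ : ∀ ξ, σ ξ = Real.sqrt (∑ k, p k ξ * (lam k ξ - ∑ j, p j ξ * lam j ξ) ^ 2))
    (C : ℝ)
    (hC : ∀ ξ ∈ Icc q (q + Δq), Real.sqrt (∑ k, lam' k ξ ^ 2) ≤ C)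
    (σmax : ℝ) (hσmax : σmax = sSup (σ '' Icc q (q + Δq))) :
    |H (q + Δq) - H q| ≤ β ^ 2 * σmax * C * |Δq| := by
  have hne : (Finset.univ : Finset (Fin n)).Nonempty :=
    Finset.univ_nonempty_iff.mpr (Fin.pos_iff_nonempty.mp hn)
  set E : Fin n → ℝ → ℝ := fun k ξ => Real.exp (-β * lam k ξ) with hE
  set Z : ℝ → ℝ := fun ξ => ∑ j, E j ξ with hZdef
  have hZx : ∀ ξ, Z ξ = ∑ j, E j ξ := fun _ => rfl
  have hZpos : ∀ ξ, 0 < Z ξ := fun ξ => Finset.sum_pos (fun j _ => Real.exp_pos _) hne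
  have hZne : ∀ ξ, Z ξ ≠ 0 := fun ξ => (hZpos ξ).ne'
  have hpk : ∀ k ξ, p k ξ = E k ξ / Z ξ := hp
  have hppos : ∀ k ξ, 0 < p k ξ := by
    intro k ξ; rw [hpk]; exact div_pos (Real.exp_pos _) (hZpos ξ)
  have hple : ∀ k ξ, p k ξ ≤ 1 := by
    intro k ξ; rw [hpk, div_le_one (hZpos ξ), hZx]
    exact Finset.single_le_sum (f := fun j => E j ξ)
      (fun j _ => (Real.exp_pos _).le) (Finset.mem_univ k)
  have hpsum : ∀ ξ, ∑ k, p k ξ = 1 := by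
    intro ξ
    simp_rw [hpk, ← Finset.sum_div, ← hZx]
    exact div_self (hZne ξ)
  -- generic weighted-sum identity
  have hsum_p : ∀ (ξ : ℝ) (f : Fin n → ℝ),
      ∑ k, p k ξ * f k = (∑ k, f k * E k ξ) / Z ξ := by
    intro ξ f
    rw [Finset.sum_div]
    refine Finset.sum_congr rfl fun k _ => ?_
    rw [hpk]; ring
  set F : ℝ → ℝ := fun ξ => ∑ k, lam k ξ * E k ξ with hFdef
  have hFx : ∀ ξ, F ξ = ∑ k, lam k ξ * E k ξ := fun _ => rfl
  set G : ℝ → ℝ := fun ξ => β * F ξ / Z ξ + Real.log (Z ξ) with hGdef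
  have hGx : ∀ ξ, G ξ = β * F ξ / Z ξ + Real.log (Z ξ) := fun _ => rfl
  -- H = G
  have hHG : ∀ ξ, H ξ = G ξ := by
    intro ξ
    have hlog : ∀ k, Real.log (p k ξ) = -β * lam k ξ - Real.log (Z ξ) := by
      intro k
      rw [hpk, hE]
      rw [Real.log_div (Real.exp_ne_zero _) (hZne ξ), Real.log_exp]
    have hterm : ∀ k, p k ξ * Real.log (p k ξ)
        = -(β * (p k ξ * lam k ξ) + Real.log (Z ξ) * p k ξ) := by
      intro k; rw [hlog k]; ring
    rw [hH]
    simp_rw [hterm, Finset.sum_neg_distrib, neg_neg, Finset.sum_add_distrib,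
      ← Finset.mul_sum, hpsum, hsum_p ξ (fun k => lam k ξ), ← hFx, hGx]
    ring
  -- derivatives
  set E' : Fin n → ℝ → ℝ := fun k ξ => Real.exp (-β * lam k ξ) * (-β * lam' k ξ) with hE'def
  have hE'x : ∀ k ξ, E' k ξ = E k ξ * (-β * lam' k ξ) := fun _ _ => rfl
  have hEderiv : ∀ k ξ, HasDerivAt (E k) (E' k ξ) ξ := by
    intro k ξ
    exact ((hderiv k ξ).const_mul (-β)).exp
  set Z' : ℝ → ℝ := fun ξ => ∑ k, E' k ξ with hZ'def
  have hZ'x : ∀ ξ, Z' ξ = ∑ k, E' k ξ := fun _ => rfl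
  have hZderiv : ∀ ξ, HasDerivAt Z (Z' ξ) ξ := by
    intro ξ
    exact HasDerivAt.fun_sum fun k _ => hEderiv k ξ
  set F' : ℝ → ℝ := fun ξ => ∑ k, (lam' k ξ * E k ξ + lam k ξ * E' k ξ) with hF'def
  have hF'x : ∀ ξ, F' ξ = ∑ k, (lam' k ξ * E k ξ + lam k ξ * E' k ξ) := fun _ => rfl
  have hFderiv : ∀ ξ, HasDerivAt F (F' ξ) ξ := by
    intro ξ
    exact HasDerivAt.fun_sum fun k _ => (hderiv k ξ).mul (hEderiv k ξ)
  set D : ℝ → ℝ := fun ξ =>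
    (β * F' ξ * Z ξ - β * F ξ * Z' ξ) / Z ξ ^ 2 + Z' ξ / Z ξ with hDdef
  have hDx : ∀ ξ, D ξ = (β * F' ξ * Z ξ - β * F ξ * Z' ξ) / Z ξ ^ 2 + Z' ξ / Z ξ :=
    fun _ => rfl
  have hGderiv : ∀ ξ, HasDerivAt G (D ξ) ξ := by
    intro ξ
    exact (((hFderiv ξ).const_mul β).div (hZderiv ξ) (hZne ξ)).add
      ((hZderiv ξ).log (hZne ξ))
  -- continuity of σ; boundedness
  have hlamc : ∀ k, Continuous (lam k) := by
    intro k
    exact continuous_iff_continuousAt.mpr fun ξ => (hderiv k ξ).continuousAt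
  have hEc : ∀ k, Continuous (E k) := fun k => (continuous_const.mul (hlamc k)).rexp
  have hZc : Continuous Z := continuous_finset_sum _ fun k _ => hEc k
  have hpc : ∀ k, Continuous (p k) := by
    intro k
    have : p k = fun ξ => E k ξ / Z ξ := funext fun ξ => hpk k ξ
    rw [this]
    exact (hEc k).div hZc hZne
  have hσc : Continuous σ := by
    have : σ = fun ξ => Real.sqrt (∑ k, p k ξ * (lam k ξ - ∑ j, p j ξ * lam j ξ) ^ 2) :=
      funext hσ
    rw [this]
    apply Continuous.sqrt
    apply continuous_finset_sum
    intro k _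
    exact (hpc k).mul
      (((hlamc k).sub (continuous_finset_sum _ fun j _ => (hpc j).mul (hlamc j))).pow 2)
  have hσle : ∀ ξ ∈ Icc q (q + Δq), σ ξ ≤ σmax := by
    intro ξ hξ
    rw [hσmax]
    exact le_csSup ((isCompact_Icc.image hσc).bddAbove) (mem_image_of_mem σ hξ)
  have hCpos : 0 ≤ C := le_trans (Real.sqrt_nonneg _)
    (hC q ⟨le_refl q, by linarith⟩)
  -- the key derivative bound
  have key : ∀ ξ ∈ Icc q (q + Δq), ‖D ξ‖ ≤ β ^ 2 * σmax * C := by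
    intro ξ hξ
    set A : ℝ := ∑ j, p j ξ * lam j ξ with hA
    set B : ℝ := ∑ j, p j ξ * lam' j ξ with hB
    -- rewrite D ξ as -β² * covariance
    have hDcov : D ξ = -β ^ 2 * ∑ k, p k ξ * ((lam k ξ - A) * (lam' k ξ - B)) := by
      have hcov : ∑ k, p k ξ * ((lam k ξ - A) * (lam' k ξ - B))
          = (∑ k, p k ξ * (lam k ξ * lam' k ξ)) - A * B := by
        have expand : ∀ k, p k ξ * ((lam k ξ - A) * (lam' k ξ - B))
            = p k ξ * (lam k ξ * lam' k ξ) - B * (p k ξ * lam k ξ)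
              - A * (p k ξ * lam' k ξ) + A * B * p k ξ := by
          intro k; ring
        simp_rw [expand, Finset.sum_add_distrib, Finset.sum_sub_distrib,
          ← Finset.mul_sum, ← hA, ← hB, hpsum]
        ring
      have hS2 : ∑ k, p k ξ * (lam k ξ * lam' k ξ)
          = (∑ k, lam k ξ * lam' k ξ * E k ξ) / Z ξ :=
        hsum_p ξ (fun k => lam k ξ * lam' k ξ)
      have hAeq : A = F ξ / Z ξ := by
        rw [hA, hsum_p ξ (fun k => lam k ξ), ← hFx]
      have hBeq : B = (∑ k, lam' k ξ * E k ξ) / Z ξ :=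
        hsum_p ξ (fun k => lam' k ξ)
      have hF'eq : F' ξ = (∑ k, lam' k ξ * E k ξ)
          - β * ∑ k, lam k ξ * lam' k ξ * E k ξ := by
        rw [hF'x, Finset.mul_sum, ← Finset.sum_sub_distrib]
        exact Finset.sum_congr rfl fun k _ => by rw [hE'x]; ring
      have hZ'eq : Z' ξ = -β * ∑ k, lam' k ξ * E k ξ := by
        rw [hZ'x, Finset.mul_sum]
        exact Finset.sum_congr rfl fun k _ => by rw [hE'x]; ring
      rw [hcov, hS2, hAeq, hBeq, hDx, hF'eq, hZ'eq]
      have gen : ∀ s1 s2 f z : ℝ, z ≠ 0 →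
          (β * (s1 - β * s2) * z - β * f * (-β * s1)) / z ^ 2 + (-β * s1) / z
            = -β ^ 2 * (s2 / z - f / z * (s1 / z)) := by
        intro s1 s2 f z hz
        field_simp
        ring
      exact gen _ _ _ _ (hZne ξ)
    -- Cauchy–Schwarz
    have hCS : (∑ k, p k ξ * ((lam k ξ - A) * (lam' k ξ - B))) ^ 2
        ≤ (∑ k, p k ξ * (lam k ξ - A) ^ 2) * ∑ k, p k ξ * (lam' k ξ - B) ^ 2 := by
      have h := Finset.sum_mul_sq_le_sq_mul_sq Finset.univ
        (fun k => Real.sqrt (p k ξ) * (lam k ξ - A))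
        (fun k => Real.sqrt (p k ξ) * (lam' k ξ - B))
      have e1 : ∑ k, (Real.sqrt (p k ξ) * (lam k ξ - A)) * (Real.sqrt (p k ξ) * (lam' k ξ - B))
          = ∑ k, p k ξ * ((lam k ξ - A) * (lam' k ξ - B)) := by
        refine Finset.sum_congr rfl fun k _ => ?_
        have hm := Real.mul_self_sqrt (hppos k ξ).le
        linear_combination (lam k ξ - A) * (lam' k ξ - B) * hm
      have e2 : ∑ k, (Real.sqrt (p k ξ) * (lam k ξ - A)) ^ 2
          = ∑ k, p k ξ * (lam k ξ - A) ^ 2 := by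
        refine Finset.sum_congr rfl fun k _ => ?_
        rw [mul_pow, Real.sq_sqrt (hppos k ξ).le]
      have e3 : ∑ k, (Real.sqrt (p k ξ) * (lam' k ξ - B)) ^ 2
          = ∑ k, p k ξ * (lam' k ξ - B) ^ 2 := by
        refine Finset.sum_congr rfl fun k _ => ?_
        rw [mul_pow, Real.sq_sqrt (hppos k ξ).le]
      rw [e1, e2, e3] at h
      exact h
    have hvsum : ∑ k, p k ξ * (lam' k ξ - B) ^ 2 ≤ ∑ k, lam' k ξ ^ 2 := by
      have hexp : ∑ k, p k ξ * (lam' k ξ - B) ^ 2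
          = (∑ k, p k ξ * lam' k ξ ^ 2) - B ^ 2 := by
        have expand : ∀ k, p k ξ * (lam' k ξ - B) ^ 2
            = p k ξ * lam' k ξ ^ 2 - 2 * B * (p k ξ * lam' k ξ) + B ^ 2 * p k ξ := by
          intro k; ring
        simp_rw [expand, Finset.sum_add_distrib, Finset.sum_sub_distrib,
          ← Finset.mul_sum, ← hB, hpsum]
        ring
      have hle2 : ∑ k, p k ξ * lam' k ξ ^ 2 ≤ ∑ k, lam' k ξ ^ 2 := by
        apply Finset.sum_le_sum
        intro k _
        nlinarith [hple k ξ, sq_nonneg (lam' k ξ), hppos k ξ]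
      nlinarith [sq_nonneg B]
    have hσnn : 0 ≤ σ ξ := by rw [hσ]; exact Real.sqrt_nonneg _
    have hcovbound : |∑ k, p k ξ * ((lam k ξ - A) * (lam' k ξ - B))| ≤ σ ξ * C := by
      have h1 : |∑ k, p k ξ * ((lam k ξ - A) * (lam' k ξ - B))|
          ≤ Real.sqrt ((∑ k, p k ξ * (lam k ξ - A) ^ 2)
              * ∑ k, p k ξ * (lam' k ξ - B) ^ 2) := by
        rw [← Real.sqrt_sq_eq_abs]
        exact Real.sqrt_le_sqrt hCS
      have h2 : Real.sqrt ((∑ k, p k ξ * (lam k ξ - A) ^ 2)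
              * ∑ k, p k ξ * (lam' k ξ - B) ^ 2)
          = σ ξ * Real.sqrt (∑ k, p k ξ * (lam' k ξ - B) ^ 2) := by
        rw [hσ, ← hA, Real.sqrt_mul]
        apply Finset.sum_nonneg
        intro k _
        exact mul_nonneg (hppos k ξ).le (sq_nonneg _)
      have h3 : Real.sqrt (∑ k, p k ξ * (lam' k ξ - B) ^ 2) ≤ C :=
        le_trans (Real.sqrt_le_sqrt hvsum) (hC ξ hξ)
      calc |∑ k, p k ξ * ((lam k ξ - A) * (lam' k ξ - B))|
          ≤ σ ξ * Real.sqrt (∑ k, p k ξ * (lam' k ξ - B) ^ 2) := h2 ▸ h1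
        _ ≤ σ ξ * C := mul_le_mul_of_nonneg_left h3 hσnn
    have hσm : σ ξ ≤ σmax := hσle ξ hξ
    rw [Real.norm_eq_abs, hDcov, abs_mul, abs_neg, abs_pow, abs_of_pos hβ]
    calc β ^ 2 * |∑ k, p k ξ * ((lam k ξ - A) * (lam' k ξ - B))|
        ≤ β ^ 2 * (σ ξ * C) := mul_le_mul_of_nonneg_left hcovbound (by positivity)
      _ ≤ β ^ 2 * (σmax * C) := by
          apply mul_le_mul_of_nonneg_left _ (by positivity)
          exact mul_le_mul_of_nonneg_right hσm hCpos
      _ = β ^ 2 * σmax * C := by ring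
  -- conclude via the mean value inequality
  have main : ‖G (q + Δq) - G q‖ ≤ (β ^ 2 * σmax * C) * ‖(q + Δq) - q‖ :=
    Convex.norm_image_sub_le_of_norm_hasDerivWithin_le
      (fun x _ => (hGderiv x).hasDerivWithinAt) key (convex_Icc _ _)
      ⟨le_refl q, by linarith⟩ ⟨by linarith, le_refl _⟩
  rw [hHG, hHG]
  simpa [Real.norm_eq_abs, add_sub_cancel_left] using main
end

section
/- Hoffman–Wielandt-type consequence: if L and L' are n×n Hermitian matrices with eigenvalues λ_1 ≤ ... ≤ λ_n and λ'_1 ≤ ... ≤ λ'_n listed in nondecreasing order, then Σ_k (λ_k - λ'_k)² ≤ ‖L - L'‖_F², where ‖·‖_F is the Frobenius norm. -/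
open Polynomial Matrix Finset

section HWAux

lemma hw_charpoly_diagonal {n : ℕ} (d : Fin n → ℂ) :
    (Matrix.diagonal d).charpoly = ∏ k, (X - C (d k)) := by
  rw [Matrix.charpoly]
  have : charmatrix (Matrix.diagonal d) = Matrix.diagonal (fun i => (X : ℂ[X]) - C (d i)) := by
    ext i j
    by_cases h : i = j
    · subst h; simp [charmatrix_apply_eq]
    · simp [charmatrix_apply_ne _ _ _ h, Matrix.diagonal_apply_ne _ h]
  rw [this, Matrix.det_diagonal]

lemma hw_charpoly_conj {n : ℕ} (U V A : Matrix (Fin n) (Fin n) ℂ)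
    (hUV : U * V = 1) :
    (U * A * V).charpoly = A.charpoly := by
  unfold Matrix.charpoly
  have h1 : (U.map C) * (V.map C) = 1 := by
    simpa [Matrix.map_mul] using congrArg (fun M => M.map (C : ℂ →+* ℂ[X])) hUV
  have hcm : charmatrix (U * A * V) =
      (U.map C) * charmatrix A * (V.map C) := by
    rw [charmatrix, charmatrix]
    rw [Matrix.mul_sub, Matrix.sub_mul]
    congr 1
    · have hs : (scalar (Fin n)) (X : ℂ[X]) = (X : ℂ[X]) • (1 : Matrix (Fin n) (Fin n) ℂ[X]) := by
        ext i j
        by_cases h : i = j <;>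
          simp [Matrix.scalar_apply, Matrix.one_apply, Matrix.diagonal_apply, h]
      rw [hs, Matrix.mul_smul, Matrix.smul_mul, mul_one, h1]
    · simp [Matrix.map_mul]
  rw [hcm, Matrix.det_mul, Matrix.det_mul]
  have hdet : (U.map C).det * (V.map C).det = 1 := by
    rw [← Matrix.det_mul, h1, Matrix.det_one]
  calc (U.map C).det * (charmatrix A).det * (V.map C).det
      = (U.map C).det * (V.map C).det * (charmatrix A).det := by ring
    _ = (charmatrix A).det := by rw [hdet, one_mul]

lemma hw_roots_prod {n : ℕ} (f : Fin n → ℂ) :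
    (∏ k, (X - C (f k))).roots = Multiset.map f Finset.univ.val := by
  have : ∏ k, (X - C (f k))
      = (Multiset.map (fun a => X - C a) (Multiset.map f Finset.univ.val)).prod := by
    rw [Multiset.map_map]
    rfl
  rw [this, Polynomial.roots_multiset_prod_X_sub_C]

lemma hw_perm_of_multiset_eq {n : ℕ} {f g : Fin n → ℝ}
    (hf : Monotone f)
    (h : Multiset.map f Finset.univ.val = Multiset.map g Finset.univ.val) :
    ∃ σ : Equiv.Perm (Fin n), f = g ∘ σ := by
  refine ⟨Tuple.sort g, ?_⟩
  have hperm : Multiset.map (g ∘ Tuple.sort g) Finset.univ.val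
      = Multiset.map g Finset.univ.val := by
    have huniv : Multiset.map (Tuple.sort g : Fin n → Fin n) Finset.univ.val
        = Finset.univ.val := by
      have := Finset.map_univ_equiv (Tuple.sort g)
      simpa [Finset.map] using congrArg Finset.val this
    calc Multiset.map (g ∘ Tuple.sort g) Finset.univ.val
        = Multiset.map g (Multiset.map (Tuple.sort g) Finset.univ.val) := by
          rw [Multiset.map_map]
      _ = Multiset.map g Finset.univ.val := by rw [huniv]
  have hms : Multiset.map f Finset.univ.val
      = Multiset.map (g ∘ Tuple.sort g) Finset.univ.val := h.trans hperm.symm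
  rw [Fin.univ_val_map, Fin.univ_val_map] at hms
  have hlp : (List.ofFn f).Perm (List.ofFn (g ∘ Tuple.sort g)) :=
    Multiset.coe_eq_coe.mp hms
  have heq : List.ofFn f = List.ofFn (g ∘ Tuple.sort g) :=
    List.Perm.eq_of_sortedLE (List.sortedLE_ofFn_iff.mpr hf)
      (List.sortedLE_ofFn_iff.mpr (Tuple.monotone_sort g)) hlp
  exact List.ofFn_injective heq

/-- From the charpoly hypothesis, a Hermitian matrix is unitarily conjugate to
`diagonal μ` with the *given* (sorted) `μ`. -/
lemma hw_exists_unitary {n : ℕ} {L : Matrix (Fin n) (Fin n) ℂ}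
    (hL : L.IsHermitian) {μ : Fin n → ℝ} (hμ : Monotone μ)
    (hchar : L.charpoly = ∏ k, (X - C ((μ k : ℂ)))) :
    ∃ U : Matrix (Fin n) (Fin n) ℂ,
      U * Uᴴ = 1 ∧ Uᴴ * U = 1 ∧
      L = U * Matrix.diagonal (fun k => (μ k : ℂ)) * Uᴴ := by
  classical
  set U₀ : Matrix (Fin n) (Fin n) ℂ := (hL.eigenvectorUnitary : Matrix (Fin n) (Fin n) ℂ)
  have hU₀1 : U₀ * U₀ᴴ = 1 := by
    have := (Matrix.mem_unitaryGroup_iff).mp hL.eigenvectorUnitary.2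
    simpa [Matrix.star_eq_conjTranspose] using this
  have hU₀2 : U₀ᴴ * U₀ = 1 := by
    have := (Matrix.mem_unitaryGroup_iff').mp hL.eigenvectorUnitary.2
    simpa [Matrix.star_eq_conjTranspose] using this
  set ev : Fin n → ℝ := hL.eigenvalues
  have hspec : L = U₀ * Matrix.diagonal (fun k => (ev k : ℂ)) * U₀ᴴ := by
    have := hL.spectral_theorem
    simpa [Matrix.star_eq_conjTranspose, Function.comp_def] using this
  -- charpoly of L is the product over ev
  have hcev : L.charpoly = ∏ k, (X - C ((ev k : ℂ))) := by
    rw [hspec, hw_charpoly_conj U₀ U₀ᴴ _ hU₀1, hw_charpoly_diagonal]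
  -- equal multisets
  have hms : Multiset.map μ Finset.univ.val = Multiset.map ev Finset.univ.val := by
    have h1 : Multiset.map (fun k => ((μ k : ℝ) : ℂ)) Finset.univ.val
        = Multiset.map (fun k => ((ev k : ℝ) : ℂ)) Finset.univ.val := by
      rw [← hw_roots_prod (fun k => ((μ k : ℝ) : ℂ)), ← hw_roots_prod (fun k => ((ev k : ℝ) : ℂ)),
        ← hchar, ← hcev]
    have h2 : Multiset.map (Complex.ofReal) (Multiset.map μ Finset.univ.val)
        = Multiset.map (Complex.ofReal) (Multiset.map ev Finset.univ.val) := by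
      rw [Multiset.map_map, Multiset.map_map]
      exact h1
    exact Multiset.map_injective Complex.ofReal_injective h2
  obtain ⟨σ, hσ⟩ := hw_perm_of_multiset_eq hμ hms
  -- permutation matrices
  set P : Matrix (Fin n) (Fin n) ℂ := (1 : Matrix (Fin n) (Fin n) ℂ).submatrix σ id
  set Q : Matrix (Fin n) (Fin n) ℂ := (1 : Matrix (Fin n) (Fin n) ℂ).submatrix id σ
  have hPQ : P * Q = 1 := by
    have := Matrix.submatrix_mul_equiv (1 : Matrix (Fin n) (Fin n) ℂ)
      (1 : Matrix (Fin n) (Fin n) ℂ) σ (Equiv.refl (Fin n)) σ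
    simpa [P, Q, Matrix.submatrix_one_equiv] using this
  have hQP : Q * P = 1 := by
    have := Matrix.submatrix_mul_equiv (1 : Matrix (Fin n) (Fin n) ℂ)
      (1 : Matrix (Fin n) (Fin n) ℂ) (id : Fin n → Fin n) σ (id : Fin n → Fin n)
    simpa [P, Q] using this
  have hQH : Qᴴ = P := by
    ext i j
    by_cases h : σ j = i <;>
      simp [P, Q, Matrix.conjTranspose_apply, Matrix.one_apply, h, eq_comm]
  have hPH : Pᴴ = Q := by
    rw [← hQH, Matrix.conjTranspose_conjTranspose]
  have hQPX : ∀ X : Matrix (Fin n) (Fin n) ℂ, Q * (P * X) = X := fun X => by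
    rw [← mul_assoc, hQP, one_mul]
  have h1 : P * Matrix.diagonal (fun k => (ev k : ℂ))
      = (Matrix.diagonal (fun k => (ev k : ℂ))).submatrix σ id := by
    have := Matrix.submatrix_mul_equiv (1 : Matrix (Fin n) (Fin n) ℂ)
      (Matrix.diagonal (fun k => (ev k : ℂ))) σ (Equiv.refl (Fin n)) (id : Fin n → Fin n)
    simpa [P] using this
  have h2 : (Matrix.diagonal (fun k => (ev k : ℂ))).submatrix σ id * Q
      = Matrix.diagonal (fun k => ((ev (σ k) : ℂ))) := by
    have := Matrix.submatrix_mul_equiv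
      (Matrix.diagonal (fun k => (ev k : ℂ)))
      (1 : Matrix (Fin n) (Fin n) ℂ) (⇑σ) (Equiv.refl (Fin n)) (⇑σ)
    simpa [Q, Matrix.submatrix_diagonal_equiv, Function.comp_def] using this
  have hdiag : P * Matrix.diagonal (fun k => (ev k : ℂ)) * Q
      = Matrix.diagonal (fun k => (μ k : ℂ)) := by
    rw [h1, h2]
    congr 1
    funext k
    rw [hσ]
    simp
  refine ⟨U₀ * Q, ?_, ?_, ?_⟩
  · rw [Matrix.conjTranspose_mul, hQH, ← mul_assoc, mul_assoc U₀ Q P, hQP, mul_one, hU₀1]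
  · rw [Matrix.conjTranspose_mul, hQH, ← mul_assoc, mul_assoc P U₀ᴴ U₀, hU₀2, mul_one, hPQ]
  · rw [Matrix.conjTranspose_mul, hQH, ← hdiag, hspec]
    simp only [mul_assoc]
    rw [hQPX, hQPX]


lemma hw_frob_trace {n : ℕ} (M : Matrix (Fin n) (Fin n) ℂ) :
    ∑ u, ∑ v, ‖M u v‖ ^ 2 = (Matrix.trace (Mᴴ * M)).re := by
  rw [Matrix.trace]
  simp only [Matrix.diag_apply, Matrix.mul_apply, Matrix.conjTranspose_apply]
  rw [Complex.re_sum]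
  rw [Finset.sum_comm]
  refine Finset.sum_congr rfl fun u _ => ?_
  rw [Complex.re_sum]
  refine Finset.sum_congr rfl fun v _ => ?_
  rw [Complex.sq_norm]
  simp [mul_comm, Complex.mul_conj]

lemma hw_frob_conj {n : ℕ} (U V B : Matrix (Fin n) (Fin n) ℂ)
    (hU : Uᴴ * U = 1) (hV : Vᴴ * V = 1) :
    ∑ u, ∑ v, ‖(U * B * Vᴴ) u v‖ ^ 2 = ∑ u, ∑ v, ‖B u v‖ ^ 2 := by
  rw [hw_frob_trace, hw_frob_trace]
  congr 1
  have h1 : (U * B * Vᴴ)ᴴ = V * Bᴴ * Uᴴ := by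
    simp [Matrix.conjTranspose_mul, mul_assoc]
  rw [h1]
  have : V * Bᴴ * Uᴴ * (U * B * Vᴴ) = V * (Bᴴ * B) * Vᴴ := by
    simp only [mul_assoc]
    rw [← mul_assoc Uᴴ U (B * Vᴴ), hU, one_mul]
  rw [this, Matrix.trace_mul_comm, ← mul_assoc Vᴴ V, hV, one_mul]

lemma hw_rearrange {n : ℕ} {μ μ' : Fin n → ℝ} (hμ : Monotone μ) (hμ' : Monotone μ')
    (σ : Equiv.Perm (Fin n)) :
    ∑ i, (μ i - μ' i) ^ 2 ≤ ∑ i, (μ i - μ' (σ i)) ^ 2 := by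
  have hmono : Monovary μ μ' := by
    intro i j h
    have hij : i ≤ j := by
      by_contra h'
      push_neg at h'
      exact absurd (hμ' h'.le) (not_le.mpr h)
    exact hμ hij
  have h1 : ∑ i, μ i * μ' (σ i) ≤ ∑ i, μ i * μ' i :=
    hmono.sum_mul_comp_perm_le_sum_mul (σ := σ)
  have h2 : ∑ i, μ' (σ i) ^ 2 = ∑ i, μ' i ^ 2 := Equiv.sum_comp σ (fun i => μ' i ^ 2)
  have expand : ∀ g : Fin n → ℝ,
      ∑ i, (μ i - g i) ^ 2 = ∑ i, μ i ^ 2 - 2 * (∑ i, μ i * g i) + ∑ i, g i ^ 2 := by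
    intro g
    rw [Finset.mul_sum, ← Finset.sum_sub_distrib, ← Finset.sum_add_distrib]
    exact Finset.sum_congr rfl fun i _ => by ring
  rw [expand μ', expand (fun i => μ' (σ i))]
  linarith

lemma hw_S_mem {n : ℕ} {W : Matrix (Fin n) (Fin n) ℂ}
    (hW1 : W * Wᴴ = 1) (hW2 : Wᴴ * W = 1) :
    Matrix.of (fun i j => ‖W i j‖ ^ 2) ∈ doublyStochastic ℝ (Fin n) := by
  rw [mem_doublyStochastic_iff_sum]
  refine ⟨fun i j => by simp only [Matrix.of_apply]; positivity, fun i => ?_, fun j => ?_⟩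
  · have h := congrFun (congrFun hW1 i) i
    have : (W * Wᴴ) i i = ∑ j, (Complex.normSq (W i j) : ℂ) := by
      rw [Matrix.mul_apply]
      refine Finset.sum_congr rfl fun j _ => ?_
      rw [Matrix.conjTranspose_apply]
      simp [Complex.mul_conj]
    rw [this] at h
    have h1 : (1 : Matrix (Fin n) (Fin n) ℂ) i i = 1 := by simp
    rw [h1] at h
    have := congrArg Complex.re h
    rw [Complex.re_sum] at this
    simp only [Complex.ofReal_re, Complex.one_re] at this
    simpa [Complex.sq_norm] using this
  · have h := congrFun (congrFun hW2 j) j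
    have : (Wᴴ * W) j j = ∑ i, (Complex.normSq (W i j) : ℂ) := by
      rw [Matrix.mul_apply]
      refine Finset.sum_congr rfl fun i _ => ?_
      rw [Matrix.conjTranspose_apply]
      simp [mul_comm, Complex.mul_conj]
    rw [this] at h
    have h1 : (1 : Matrix (Fin n) (Fin n) ℂ) j j = 1 := by simp
    rw [h1] at h
    have := congrArg Complex.re h
    rw [Complex.re_sum] at this
    simp only [Complex.ofReal_re, Complex.one_re] at this
    simpa [Complex.sq_norm] using this

end HWAux

open Polynomial in
/-- Hoffman–Wielandt inequality for Hermitian matrices: if `L` and `L'` are Hermitian with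
eigenvalues `μ` and `μ'` listed in nondecreasing order (with multiplicity, as the roots of
the characteristic polynomials), then `Σ_k (μ_k - μ'_k)² ≤ ‖L - L'‖_F²`. -/
theorem hoffman_wielandt_hermitian
    (n : ℕ) (L L' : Matrix (Fin n) (Fin n) ℂ)
    (hL : L.IsHermitian) (hL' : L'.IsHermitian)
    (μ μ' : Fin n → ℝ) (hμ : Monotone μ) (hμ' : Monotone μ')
    (hchar : L.charpoly = ∏ k, (X - C ((μ k : ℂ))))
    (hchar' : L'.charpoly = ∏ k, (X - C ((μ' k : ℂ)))) :
    ∑ k, (μ k - μ' k) ^ 2 ≤ ∑ u, ∑ v, ‖(L - L') u v‖ ^ 2 := by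
  classical
  obtain ⟨U, hU1, hU2, hLU⟩ := hw_exists_unitary hL hμ hchar
  obtain ⟨V, hV1, hV2, hLV⟩ := hw_exists_unitary hL' hμ' hchar'
  set Dμ : Matrix (Fin n) (Fin n) ℂ := Matrix.diagonal (fun k => (μ k : ℂ)) with hDμ
  set Dν : Matrix (Fin n) (Fin n) ℂ := Matrix.diagonal (fun k => (μ' k : ℂ)) with hDν
  set W : Matrix (Fin n) (Fin n) ℂ := Uᴴ * V with hWdef
  have hWH : Wᴴ = Vᴴ * U := by
    rw [hWdef, Matrix.conjTranspose_mul, Matrix.conjTranspose_conjTranspose]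
  have hW1 : W * Wᴴ = 1 := by
    rw [hWdef, hWH, mul_assoc, ← mul_assoc V Vᴴ U, hV1, one_mul, hU2]
  have hW2 : Wᴴ * W = 1 := by
    rw [hWdef, hWH, mul_assoc, ← mul_assoc U Uᴴ V, hU1, one_mul, hV2]
  have hB : L - L' = U * (Dμ * W - W * Dν) * Vᴴ := by
    rw [hLU, hLV, Matrix.mul_sub, Matrix.sub_mul, hWdef]
    congr 1
    · simp only [mul_assoc]
      rw [hV1, mul_one]
    · simp only [mul_assoc]
      rw [← mul_assoc U Uᴴ, hU1, one_mul]
  rw [hB, hw_frob_conj U V _ hU2 hV2]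
  -- entries of B
  set S : Matrix (Fin n) (Fin n) ℝ := Matrix.of (fun i j => ‖W i j‖ ^ 2) with hSdef
  have hent : ∀ i j, ‖(Dμ * W - W * Dν) i j‖ ^ 2 = S i j * (μ i - μ' j) ^ 2 := by
    intro i j
    have h1 : (Dμ * W - W * Dν) i j = ((μ i : ℂ) - (μ' j : ℂ)) * W i j := by
      rw [Matrix.sub_apply, hDμ, hDν, Matrix.diagonal_mul, Matrix.mul_diagonal]
      ring
    rw [h1, norm_mul, mul_pow]
    have h2 : ‖(μ i : ℂ) - (μ' j : ℂ)‖ = |μ i - μ' j| := by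
      rw [← Complex.ofReal_sub, Complex.norm_real, Real.norm_eq_abs]
    rw [h2, sq_abs, hSdef]
    simp only [Matrix.of_apply]
    ring
  have hsum : ∑ u, ∑ v, ‖(Dμ * W - W * Dν) u v‖ ^ 2
      = ∑ u, ∑ v, S u v * (μ u - μ' v) ^ 2 := by
    exact Finset.sum_congr rfl fun u _ => Finset.sum_congr rfl fun v _ => hent u v
  rw [hsum]
  -- Birkhoff
  obtain ⟨w, hw0, hwsum, hwS⟩ :=
    exists_eq_sum_perm_of_mem_doublyStochastic (hw_S_mem hW1 hW2)
  have hSij : ∀ i j, S i j = ∑ σ : Equiv.Perm (Fin n), w σ * (σ.permMatrix ℝ) i j := by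
    intro i j
    rw [hSdef, ← hwS]
    simp only [Matrix.sum_apply, Matrix.smul_apply, smul_eq_mul]
  have hperm_entry : ∀ (σ : Equiv.Perm (Fin n)) i,
      ∑ j, (σ.permMatrix ℝ) i j * (μ i - μ' j) ^ 2 = (μ i - μ' (σ i)) ^ 2 := by
    intro σ i
    have : ∀ j, (σ.permMatrix ℝ) i j = if j = σ i then (1:ℝ) else 0 := by
      intro j
      simp [Equiv.Perm.permMatrix, PEquiv.toMatrix_apply, Equiv.toPEquiv_apply, eq_comm]
    simp only [this, ite_mul, one_mul, zero_mul]
    rw [Finset.sum_ite_eq' Finset.univ (σ i) (fun j => (μ i - μ' j) ^ 2)]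
    simp
  have hrow : ∀ u, ∑ v, S u v * (μ u - μ' v) ^ 2
      = ∑ σ : Equiv.Perm (Fin n), w σ * (μ u - μ' (σ u)) ^ 2 := by
    intro u
    simp only [hSij, Finset.sum_mul]
    rw [Finset.sum_comm]
    refine Finset.sum_congr rfl fun σ _ => ?_
    rw [← hperm_entry σ u, Finset.mul_sum]
    exact Finset.sum_congr rfl fun v _ => by ring
  have hmain : ∑ u, ∑ v, S u v * (μ u - μ' v) ^ 2
      = ∑ σ : Equiv.Perm (Fin n), w σ * ∑ k, (μ k - μ' (σ k)) ^ 2 := by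
    calc ∑ u, ∑ v, S u v * (μ u - μ' v) ^ 2
        = ∑ u, ∑ σ : Equiv.Perm (Fin n), w σ * (μ u - μ' (σ u)) ^ 2 :=
          Finset.sum_congr rfl fun u _ => hrow u
      _ = ∑ σ : Equiv.Perm (Fin n), ∑ u, w σ * (μ u - μ' (σ u)) ^ 2 := Finset.sum_comm
      _ = ∑ σ : Equiv.Perm (Fin n), w σ * ∑ k, (μ k - μ' (σ k)) ^ 2 :=
          Finset.sum_congr rfl fun σ _ => (Finset.mul_sum _ _ _).symm
  rw [hmain]
  calc ∑ k, (μ k - μ' k) ^ 2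
      = ∑ σ : Equiv.Perm (Fin n), w σ * ∑ k, (μ k - μ' k) ^ 2 := by
        rw [← Finset.sum_mul, hwsum, one_mul]
    _ ≤ ∑ σ : Equiv.Perm (Fin n), w σ * ∑ k, (μ k - μ' (σ k)) ^ 2 := by
        refine Finset.sum_le_sum fun σ _ => ?_
        exact mul_le_mul_of_nonneg_left (hw_rearrange hμ hμ' σ) (hw0 σ)
end
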